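/- Let k be a field of characteristic 0 and let f, g ∈ k(t) be rational functions satisfying f³ + g³ = 1. Then f and g are constant, i.e. there exist a, b ∈ k with f = C(a) and g = C(b). -/

import Mathlib

open Polynomial UniqueFactorizationMonoid UniqueFactorizationDomain

lemma flt3 {k : Type*} [Field k] [CharZero k] {a b c : k[X]}
    (ha : a ≠ 0) (hb : b ≠ 0) (hc : c ≠ 0) (hac : IsCoprime a c)
    (heq : a ^ 3 + b ^ 3 = c ^ 3) :
    a.natDegree = 0 ∧ b.natDegree = 0 ∧ c.natDegree = 0 := by
  classical
  have hac3 : IsCoprime (a ^ 3) (c ^ 3) := hac.pow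
  have hab3 : IsCoprime (a ^ 3) (b ^ 3) := by
    have h1 : IsCoprime (a ^ 3) (c ^ 3 + a ^ 3 * (-1)) := hac3.add_mul_left_right (-1)
    have h2 : c ^ 3 + a ^ 3 * (-1) = b ^ 3 := by linear_combination -heq
    rwa [h2] at h1
  have hcb3 : IsCoprime (c ^ 3) (b ^ 3) := by
    have h1 : IsCoprime (c ^ 3) (a ^ 3 + c ^ 3 * (-1)) := hac3.symm.add_mul_left_right (-1)
    have h2 : a ^ 3 + c ^ 3 * (-1) = -(b ^ 3) := by linear_combination heq
    rw [h2] at h1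
    exact (IsCoprime.neg_right_iff _ _).mp h1
  have ha3 : a ^ 3 ≠ 0 := pow_ne_zero _ ha
  have hb3 : b ^ 3 ≠ 0 := pow_ne_zero _ hb
  have hc3 : (-(c ^ 3) : k[X]) ≠ 0 := neg_ne_zero.mpr (pow_ne_zero _ hc)
  have hsum : a ^ 3 + b ^ 3 + -(c ^ 3) = 0 := by linear_combination heq
  rcases Polynomial.abc ha3 hb3 hc3 hab3
      hsum with hdeg | hder
  · exfalso
    obtain ⟨h1, h2, h3⟩ := hdeg
    have hrad : radical (a ^ 3 * b ^ 3 * -(c ^ 3)) = radical (a * b * c) := by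
      rw [show a ^ 3 * b ^ 3 * -(c ^ 3) = -((a * b * c) ^ 3) by ring, radical_neg,
        radical_pow _ (by norm_num)]
    rw [hrad] at h1 h2 h3
    have habc : a * b * c ≠ 0 := mul_ne_zero (mul_ne_zero ha hb) hc
    have hR : (radical (a * b * c)).natDegree ≤ (a * b * c).natDegree :=
      Polynomial.natDegree_le_of_dvd (radical_dvd_self (a := a * b * c)) habc
    rw [Polynomial.natDegree_mul (mul_ne_zero ha hb) hc, Polynomial.natDegree_mul ha hb] at hR
    rw [Polynomial.natDegree_neg] at h3
    rw [Polynomial.natDegree_pow] at h1 h2 h3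
    omega
  · obtain ⟨h1, h2, h3⟩ := hder
    have key : ∀ p : k[X], p ≠ 0 → derivative (p ^ 3) = 0 → p.natDegree = 0 := by
      intro p hp hd
      rw [Polynomial.derivative_pow] at hd
      have h3ne : (Polynomial.C ((3 : ℕ) : k)) ≠ 0 :=
        Polynomial.C_ne_zero.mpr (by exact_mod_cast (by norm_num : (3 : k) ≠ 0))
      have : derivative p = 0 :=
        (mul_eq_zero.mp hd).resolve_left (mul_ne_zero h3ne (pow_ne_zero _ hp))
      exact Polynomial.natDegree_eq_zero_of_derivative_eq_zero this
    refine ⟨key a ha h1, key b hb h2, ?_⟩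
    refine key c hc ?_
    have h3' := h3
    rw [show (-c ^ 3 : k[X]) = -(c ^ 3) by ring, Polynomial.derivative_neg, neg_eq_zero] at h3'
    exact h3'

lemma ratfunc_const {k : Type*} [Field k] (x : RatFunc k)
    (h1 : x.num.natDegree = 0) (h2 : x.denom.natDegree = 0) :
    ∃ a : k, x = RatFunc.C a := by
  have ha : x.num = Polynomial.C (x.num.coeff 0) :=
    Polynomial.eq_C_coeff_zero_iff_natDegree_eq_zero.mpr h1
  have hb : x.denom = Polynomial.C (x.denom.coeff 0) :=
    Polynomial.eq_C_coeff_zero_iff_natDegree_eq_zero.mpr h2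
  refine ⟨x.num.coeff 0 / x.denom.coeff 0, ?_⟩
  conv_lhs => rw [← RatFunc.num_div_denom x]
  rw [map_div₀ (RatFunc.C (K := k))]
  conv_lhs => rw [ha, hb]
  rw [RatFunc.algebraMap_C, RatFunc.algebraMap_C]

theorem fermat_cubic_constant (k : Type*) [Field k] [CharZero k]
    (f g : RatFunc k) (h : f ^ 3 + g ^ 3 = 1) :
    ∃ a b : k, f = RatFunc.C a ∧ g = RatFunc.C b := by
  set p := f.num with hp
  set q := f.denom with hq
  set r := g.num with hr
  set s := g.denom with hs
  have hqne : q ≠ 0 := f.denom_ne_zero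
  have hsne : s ≠ 0 := g.denom_ne_zero
  have key : p ^ 3 * s ^ 3 + r ^ 3 * q ^ 3 = q ^ 3 * s ^ 3 := by
    apply RatFunc.algebraMap_injective k
    simp only [map_add, map_mul, map_pow]
    have hQ : (algebraMap k[X] (RatFunc k)) q ≠ 0 := RatFunc.algebraMap_ne_zero hqne
    have hS : (algebraMap k[X] (RatFunc k)) s ≠ 0 := RatFunc.algebraMap_ne_zero hsne
    have e := h
    rw [← RatFunc.num_div_denom f, ← RatFunc.num_div_denom g] at e
    rw [div_pow, div_pow, div_add_div _ _ (pow_ne_zero 3 hQ) (pow_ne_zero 3 hS),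
      div_eq_one_iff_eq (mul_ne_zero (pow_ne_zero 3 hQ) (pow_ne_zero 3 hS))] at e
    linear_combination e
  have hpq : IsCoprime p q := f.isCoprime_num_denom
  have hrs : IsCoprime r s := g.isCoprime_num_denom
  by_cases hpz : p = 0
  · -- f = 0
    have hf0 : f = 0 := RatFunc.num_eq_zero_iff.mp hpz
    have hr3 : r ^ 3 = s ^ 3 := by
      have : q ^ 3 * (r ^ 3) = q ^ 3 * (s ^ 3) := by
        rw [hpz] at key; linear_combination key
      exact mul_left_cancel₀ (pow_ne_zero _ hqne) this
    have hsu : IsUnit s := hrs.pow_left.isUnit_of_dvd' (hr3 ▸ dvd_pow_self s (by norm_num)) dvd_rfl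
    have hds : s.natDegree = 0 := Polynomial.natDegree_eq_zero_of_isUnit hsu
    have hdr : r.natDegree = 0 := by
      have := congrArg Polynomial.natDegree hr3
      rw [Polynomial.natDegree_pow, Polynomial.natDegree_pow] at this
      omega
    obtain ⟨b, hb⟩ := ratfunc_const g hdr hds
    exact ⟨0, b, by rw [hf0, map_zero], hb⟩
  · by_cases hrz : r = 0
    · have hg0 : g = 0 := RatFunc.num_eq_zero_iff.mp hrz
      have hp3 : p ^ 3 = q ^ 3 := by
        have : (p ^ 3) * s ^ 3 = (q ^ 3) * s ^ 3 := by
          rw [hrz] at key; linear_combination key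
        exact mul_right_cancel₀ (pow_ne_zero _ hsne) this
      have hqu : IsUnit q := hpq.pow_left.isUnit_of_dvd' (hp3 ▸ dvd_pow_self q (by norm_num)) dvd_rfl
      have hdq : q.natDegree = 0 := Polynomial.natDegree_eq_zero_of_isUnit hqu
      have hdp : p.natDegree = 0 := by
        have := congrArg Polynomial.natDegree hp3
        rw [Polynomial.natDegree_pow, Polynomial.natDegree_pow] at this
        omega
      obtain ⟨a, ha⟩ := ratfunc_const f hdp hdq
      exact ⟨a, 0, ha, by rw [hg0, map_zero]⟩
    · -- main case: p, r ≠ 0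
      have hq3s3 : q ^ 3 = s ^ 3 := by
        have d1 : q ^ 3 ∣ p ^ 3 * s ^ 3 := ⟨s ^ 3 - r ^ 3, by linear_combination key⟩
        have d2 : s ^ 3 ∣ r ^ 3 * q ^ 3 := ⟨q ^ 3 - p ^ 3, by linear_combination key⟩
        have dq : q ^ 3 ∣ s ^ 3 := (hpq.pow).symm.dvd_of_dvd_mul_left d1
        have ds : s ^ 3 ∣ q ^ 3 := (hrs.pow).symm.dvd_of_dvd_mul_left d2
        exact Polynomial.eq_of_monic_of_associated (f.monic_denom.pow 3) (g.monic_denom.pow 3)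
          (associated_of_dvd_dvd dq ds)
      have heq : p ^ 3 + r ^ 3 = s ^ 3 := by
        have : s ^ 3 * (p ^ 3 + r ^ 3) = s ^ 3 * s ^ 3 := by
          linear_combination key + (s ^ 3 - r ^ 3) * hq3s3
        exact mul_left_cancel₀ (pow_ne_zero _ hsne) this
      have hps : IsCoprime p s :=
        (hpq.pow_right (n := 3)).of_isCoprime_of_dvd_right (by rw [hq3s3]; exact dvd_pow_self s (by norm_num))
      obtain ⟨hdp, hdr, hds⟩ := flt3 hpz hrz hsne hps heq
      have hdq : q.natDegree = 0 := by
        have := congrArg Polynomial.natDegree hq3s3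
        rw [Polynomial.natDegree_pow, Polynomial.natDegree_pow] at this
        omega
      obtain ⟨a, ha⟩ := ratfunc_const f hdp hdq
      obtain ⟨b, hb⟩ := ratfunc_const g hdr hds
      exact ⟨a, b, ha, hb⟩
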